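/- arXiv:0902.4840 — 4 statements merged into one kernel-verified Lean document; each statement's English description precedes it below -/
import Mathlib

section
/- For every m with 1 ≤ m ≤ n-1, the endomorphisms Φ_{σ_m} and Ψ_{σ_m} of the free group F are mutually inverse (Ψ_{σ_m} ∘ Φ_{σ_m} = id_F and Φ_{σ_m} ∘ Ψ_{σ_m} = id_F); in particular Φ_{σ_m} is an automorphism of F. -/
namespace PureHilden

/-- The three symbols `p`, `x`, `y`. -/
inductive Sym : Type
  | p | x | y
  deriving DecidableEq

open Sym

/-- Generators of the free group `F`:  `p_{ij}, x_{ij}, y_{ij}` for `1 ≤ i < j ≤ n`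
and `t_k` for `1 ≤ k ≤ n`. -/
inductive Gen (n : ℕ) : Type
  | pair (s : Sym) (i j : ℕ) (h : 1 ≤ i ∧ i < j ∧ j ≤ n) : Gen n
  | t (k : ℕ) (h : 1 ≤ k ∧ k ≤ n) : Gen n

/-- The free group `F` on the set `S`. -/
abbrev FG (n : ℕ) := FreeGroup (Gen n)

/-- `α_{ij}` (symmetrised: `α_{ji} = α_{ij}`); junk value `1` for invalid indices. -/
def gsym (n : ℕ) (s : Sym) (i j : ℕ) : FG n :=
  if h : 1 ≤ min i j ∧ min i j < max i j ∧ max i j ≤ n then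
    FreeGroup.of (Gen.pair s (min i j) (max i j) h)
  else 1

def P (n i j : ℕ) : FG n := gsym n Sym.p i j
def X (n i j : ℕ) : FG n := gsym n Sym.x i j
def Y (n i j : ℕ) : FG n := gsym n Sym.y i j

def T (n k : ℕ) : FG n :=
  if h : 1 ≤ k ∧ k ≤ n then FreeGroup.of (Gen.t k h) else 1

/-- `1 ≤ k ≤ n`. -/
def Idx (n k : ℕ) : Prop := 1 ≤ k ∧ k ≤ n

/-- `1 ≤ i < j ≤ n`. -/
def Idx2 (n i j : ℕ) : Prop := 1 ≤ i ∧ i < j ∧ j ≤ n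

/-- `(i,j,k)` is a cyclic rotation of a strictly increasing triple. -/
def cyc3 (i j k : ℕ) : Prop := (i < j ∧ j < k) ∨ (j < k ∧ k < i) ∨ (k < i ∧ i < j)

/-- `(i,j,k,l)` is a cyclic rotation of a strictly increasing quadruple. -/
def cyc4 (i j k l : ℕ) : Prop :=
  (i < j ∧ j < k ∧ k < l) ∨ (j < k ∧ k < l ∧ l < i) ∨
  (k < l ∧ l < i ∧ i < j) ∨ (l < i ∧ i < j ∧ j < k)

def c2A : List (Sym × Sym × Sym) :=
  [(p,p,p),(p,y,y),(x,p,p),(x,x,p),(x,y,y),(y,p,p),(y,p,x),(y,y,y)]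
def c2B : List (Sym × Sym × Sym) :=
  [(p,p,p),(p,x,y),(x,p,p),(x,p,x),(x,x,y),(y,p,p),(y,x,y),(y,y,p)]
def c2C : List (Sym × Sym × Sym) :=
  [(p,p,p),(p,x,x),(x,p,p),(x,x,x),(x,y,p),(y,p,p),(y,p,y),(y,x,x)]

/-- The allowed triples `(α,β,γ)` for relation (C2), by cyclic ordering of `(i,j,k)`. -/
def C2ok (i j k : ℕ) (a b c : Sym) : Prop :=
  (i < j ∧ j < k ∧ (a,b,c) ∈ c2A) ∨
  (j < k ∧ k < i ∧ (a,b,c) ∈ c2B) ∨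
  (k < i ∧ i < j ∧ (a,b,c) ∈ c2C)

/-- The relations `R`, encoded as the words `u * v⁻¹` for each relation `u = v`. -/
inductive Rel (n : ℕ) : FG n → Prop
  | cpt {i j k : ℕ} (hij : Idx2 n i j) (hk : Idx n k) :
      Rel n (P n i j * T n k * (T n k * P n i j)⁻¹)
  | ctt {i j : ℕ} (hi : Idx n i) (hj : Idx n j) :
      Rel n (T n i * T n j * (T n j * T n i)⁻¹)
  | cxt {i j k : ℕ} (hij : Idx2 n i j) (hk : Idx n k) (hne : k ≠ i) :
      Rel n (X n i j * T n k * (T n k * X n i j)⁻¹)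
  | cyt {i j k : ℕ} (hij : Idx2 n i j) (hk : Idx n k) (hne : k ≠ j) :
      Rel n (Y n i j * T n k * (T n k * Y n i j)⁻¹)
  | c1 (a b : Sym) {i j k l : ℕ} (hi : Idx n i) (hj : Idx n j) (hk : Idx n k)
      (hl : Idx n l) (hc : cyc4 i j k l) :
      Rel n (gsym n a i j * gsym n b k l * (gsym n b k l * gsym n a i j)⁻¹)
  | c2 (a b c : Sym) {i j k : ℕ} (hi : Idx n i) (hj : Idx n j) (hk : Idx n k)
      (h : C2ok i j k a b c) :
      Rel n (gsym n a i j * (gsym n b i k * gsym n c j k) *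
             (gsym n b i k * gsym n c j k * gsym n a i j)⁻¹)
  | c3 (a b : Sym) {i j k l : ℕ} (hi : Idx n i) (hj : Idx n j) (hk : Idx n k)
      (hl : Idx n l) (hc : cyc4 i j k l) :
      Rel n (gsym n a i k * (P n j k * gsym n b j l * (P n j k)⁻¹) *
             (P n j k * gsym n b j l * (P n j k)⁻¹ * gsym n a i k)⁻¹)
  | mx {i j : ℕ} (hij : Idx2 n i j) :
      Rel n (X n i j * P n i j * T n i * (P n i j * T n i * X n i j)⁻¹)
  | my {i j : ℕ} (hij : Idx2 n i j) :
      Rel n (Y n i j * P n i j * T n j * (P n i j * T n j * Y n i j)⁻¹)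

/-- The presented group `G = ⟨S ∣ R⟩`. -/
abbrev GG (n : ℕ) := FG n ⧸ Subgroup.normalClosure {w : FG n | Rel n w}

/-- The quotient homomorphism `π : F → G`. -/
def piG (n : ℕ) : FG n →* GG n := QuotientGroup.mk' _

/-- The map defining `Φ_{σ_m}` on generators. -/
def phiSigmaMap (n m : ℕ) : Gen n → FG n
  | Gen.pair s i j _ =>
      if i = m ∧ j = m + 1 then
        match s with
        | Sym.p => P n m (m+1)
        | Sym.x => (T n (m+1))⁻¹ * Y n m (m+1) * T n (m+1)
        | Sym.y => X n m (m+1)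
      else if i = m then gsym n s (m+1) j
      else if j = m then gsym n s (m+1) i
      else if i = m + 1 then P n m (m+1) * gsym n s m j * (P n m (m+1))⁻¹
      else if j = m + 1 then P n m (m+1) * gsym n s m i * (P n m (m+1))⁻¹
      else gsym n s i j
  | Gen.t k _ =>
      if k = m then T n (m+1) else if k = m + 1 then T n m else T n k

/-- `Φ_{σ_m} : F → F`. -/
def phiSigma (n m : ℕ) : FG n →* FG n := FreeGroup.lift (phiSigmaMap n m)

/-- The map defining `Ψ_{σ_m}` on generators. -/
def psiSigmaMap (n m : ℕ) : Gen n → FG n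
  | Gen.pair s i j _ =>
      if i = m ∧ j = m + 1 then
        match s with
        | Sym.p => P n m (m+1)
        | Sym.x => Y n m (m+1)
        | Sym.y => T n m * X n m (m+1) * (T n m)⁻¹
      else if i = m then (P n m (m+1))⁻¹ * gsym n s (m+1) j * P n m (m+1)
      else if j = m then (P n m (m+1))⁻¹ * gsym n s (m+1) i * P n m (m+1)
      else if i = m + 1 then gsym n s m j
      else if j = m + 1 then gsym n s m i
      else gsym n s i j
  | Gen.t k _ =>
      if k = m then T n (m+1) else if k = m + 1 then T n m else T n k

/-- `Ψ_{σ_m} : F → F`. -/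
def psiSigma (n m : ℕ) : FG n →* FG n := FreeGroup.lift (psiSigmaMap n m)

/-- The map defining `Φ_{τ_m}` on generators. -/
def phiTauMap (n m : ℕ) : Gen n → FG n
  | Gen.pair s i j _ =>
      match s with
      | Sym.p => P n i j
      | Sym.x => if m = i then (X n i j)⁻¹ * P n i j else X n i j
      | Sym.y => if m = j then (Y n i j)⁻¹ * P n i j else Y n i j
  | Gen.t k _ => T n k

/-- `Φ_{τ_m} : F → F`. -/
def phiTau (n m : ℕ) : FG n →* FG n := FreeGroup.lift (phiTauMap n m)

/-- The map defining `Ψ_{τ_m}` on generators. -/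
def psiTauMap (n m : ℕ) : Gen n → FG n
  | Gen.pair s i j _ =>
      match s with
      | Sym.p => P n i j
      | Sym.x => if m = i then P n i j * (X n i j)⁻¹ else X n i j
      | Sym.y => if m = j then P n i j * (Y n i j)⁻¹ else Y n i j
  | Gen.t k _ => T n k

/-- `Ψ_{τ_m} : F → F`. -/
def psiTau (n m : ℕ) : FG n →* FG n := FreeGroup.lift (psiTauMap n m)

lemma gsym_eq (n : ℕ) (s : Sym) (i j : ℕ) (h : Idx2 n i j) :
    gsym n s i j = FreeGroup.of (Gen.pair s i j h) := by
  obtain ⟨h1, h2, h3⟩ := h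
  have e1 : min i j = i := by omega
  have e2 : max i j = j := by omega
  simp only [gsym, e1, e2]
  rw [dif_pos ⟨h1, h2, h3⟩]

lemma gsym_comm (n : ℕ) (s : Sym) (i j : ℕ) : gsym n s j i = gsym n s i j := by
  simp only [gsym, Nat.min_comm, Nat.max_comm]

lemma T_eq (n k : ℕ) (h : Idx n k) : T n k = FreeGroup.of (Gen.t k h) := by
  obtain ⟨ha, hb⟩ := h
  simp only [T]; rw [dif_pos ⟨ha, hb⟩]

lemma phi_of (n m : ℕ) (g : Gen n) :
    phiSigma n m (FreeGroup.of g) = phiSigmaMap n m g := FreeGroup.lift_apply_of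

lemma psi_of (n m : ℕ) (g : Gen n) :
    psiSigma n m (FreeGroup.of g) = psiSigmaMap n m g := FreeGroup.lift_apply_of

lemma comp1_gen (n m : ℕ) (hm1 : 1 ≤ m) (hm2 : m + 1 ≤ n) (g : Gen n) :
    psiSigma n m (phiSigmaMap n m g) = FreeGroup.of g := by
  have hTm : T n m = FreeGroup.of (Gen.t m ⟨hm1, by omega⟩) := T_eq n m _
  have hTm1 : T n (m+1) = FreeGroup.of (Gen.t (m+1) ⟨by omega, hm2⟩) := T_eq n (m+1) _
  have hPe : P n m (m+1) = FreeGroup.of (Gen.pair Sym.p m (m+1) ⟨hm1, by omega, hm2⟩) :=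
    gsym_eq n Sym.p m (m+1) ⟨hm1, by omega, hm2⟩
  have e1 : m + 1 ≠ m := by omega
  cases g with
  | pair s i j h =>
    obtain ⟨h1, h2, h3⟩ := h
    simp only [phiSigmaMap]
    by_cases hA : i = m ∧ j = m + 1
    · obtain ⟨rfl, rfl⟩ := hA
      have hXe : X n i (i+1) = FreeGroup.of (Gen.pair Sym.x i (i+1) ⟨h1, h2, h3⟩) :=
        gsym_eq n Sym.x i (i+1) ⟨h1, h2, h3⟩
      have hYe : Y n i (i+1) = FreeGroup.of (Gen.pair Sym.y i (i+1) ⟨h1, h2, h3⟩) :=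
        gsym_eq n Sym.y i (i+1) ⟨h1, h2, h3⟩
      rw [if_pos ⟨rfl, rfl⟩]
      cases s <;>
        simp [hPe, hXe, hYe, hTm, hTm1, psi_of, psiSigmaMap, e1, mul_assoc]
    · rw [if_neg hA]
      by_cases hB : i = m
      · subst hB
        have hj : i + 1 < j := by omega
        rw [if_pos rfl]
        have hg : gsym n s (i+1) j = FreeGroup.of (Gen.pair s (i+1) j ⟨by omega, hj, h3⟩) :=
          gsym_eq n s (i+1) j ⟨by omega, hj, h3⟩
        have hg' : gsym n s i j = FreeGroup.of (Gen.pair s i j ⟨h1, h2, h3⟩) :=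
          gsym_eq n s i j ⟨h1, h2, h3⟩
        have e2 : j ≠ i := by omega
        have e3 : j ≠ i + 1 := by omega
        simp [hg, hg', psi_of, psiSigmaMap, e1, e2, e3]
      · rw [if_neg hB]
        by_cases hC : j = m
        · subst hC
          have hi : i < j := h2
          rw [if_pos rfl]
          have hg : gsym n s (j+1) i = FreeGroup.of (Gen.pair s i (j+1) ⟨h1, by omega, hm2⟩) := by
            rw [gsym_comm]; exact gsym_eq n s i (j+1) ⟨h1, by omega, hm2⟩
          have hg' : gsym n s j i = FreeGroup.of (Gen.pair s i j ⟨h1, h2, h3⟩) := by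
            rw [gsym_comm]; exact gsym_eq n s i j ⟨h1, h2, h3⟩
          have e2 : i ≠ j := by omega
          have e3 : i ≠ j + 1 := by omega
          simp [hg, hg', psi_of, psiSigmaMap, e1, e2, e3]
        · rw [if_neg hC]
          by_cases hD : i = m + 1
          · subst hD
            have hj : m + 1 < j := h2
            rw [if_pos rfl]
            have hg : gsym n s m j = FreeGroup.of (Gen.pair s m j ⟨hm1, by omega, h3⟩) :=
              gsym_eq n s m j ⟨hm1, by omega, h3⟩
            have hg' : gsym n s (m+1) j = FreeGroup.of (Gen.pair s (m+1) j ⟨h1, h2, h3⟩) :=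
              gsym_eq n s (m+1) j ⟨h1, h2, h3⟩
            have e2 : j ≠ m := by omega
            have e3 : j ≠ m + 1 := by omega
            simp [hg, hg', hPe, psi_of, psiSigmaMap, e1, e2, e3, mul_assoc]
          · rw [if_neg hD]
            by_cases hE : j = m + 1
            · subst hE
              have hi : i < m := by omega
              rw [if_pos rfl]
              have hg : gsym n s m i = FreeGroup.of (Gen.pair s i m ⟨h1, hi, by omega⟩) := by
                rw [gsym_comm]; exact gsym_eq n s i m ⟨h1, hi, by omega⟩
              have hg' : gsym n s (m+1) i = FreeGroup.of (Gen.pair s i (m+1) ⟨h1, h2, h3⟩) := by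
                rw [gsym_comm]; exact gsym_eq n s i (m+1) ⟨h1, h2, h3⟩
              have e2 : i ≠ m := by omega
              have e3 : i ≠ m + 1 := by omega
              simp [hg, hg', hPe, psi_of, psiSigmaMap, e1, e2, e3, mul_assoc]
            · rw [if_neg hE]
              have hg : gsym n s i j = FreeGroup.of (Gen.pair s i j ⟨h1, h2, h3⟩) :=
                gsym_eq n s i j ⟨h1, h2, h3⟩
              simp [hg, psi_of, psiSigmaMap, hA, hB, hC, hD, hE]
  | t k hk =>
    simp only [phiSigmaMap]
    by_cases hB : k = m
    · subst hB
      simp [hTm, hTm1, psi_of, psiSigmaMap, e1, T_eq n k hk]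
    · by_cases hC : k = m + 1
      · subst hC
        simp [hTm, hTm1, psi_of, psiSigmaMap, e1, T_eq n (m+1) hk]
      · simp [hB, hC, psi_of, psiSigmaMap, T_eq n k hk]

lemma comp2_gen (n m : ℕ) (hm1 : 1 ≤ m) (hm2 : m + 1 ≤ n) (g : Gen n) :
    phiSigma n m (psiSigmaMap n m g) = FreeGroup.of g := by
  have hTm : T n m = FreeGroup.of (Gen.t m ⟨hm1, by omega⟩) := T_eq n m _
  have hTm1 : T n (m+1) = FreeGroup.of (Gen.t (m+1) ⟨by omega, hm2⟩) := T_eq n (m+1) _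
  have hPe : P n m (m+1) = FreeGroup.of (Gen.pair Sym.p m (m+1) ⟨hm1, by omega, hm2⟩) :=
    gsym_eq n Sym.p m (m+1) ⟨hm1, by omega, hm2⟩
  have e1 : m + 1 ≠ m := by omega
  cases g with
  | pair s i j h =>
    obtain ⟨h1, h2, h3⟩ := h
    simp only [psiSigmaMap]
    by_cases hA : i = m ∧ j = m + 1
    · obtain ⟨rfl, rfl⟩ := hA
      have hXe : X n i (i+1) = FreeGroup.of (Gen.pair Sym.x i (i+1) ⟨h1, h2, h3⟩) :=
        gsym_eq n Sym.x i (i+1) ⟨h1, h2, h3⟩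
      have hYe : Y n i (i+1) = FreeGroup.of (Gen.pair Sym.y i (i+1) ⟨h1, h2, h3⟩) :=
        gsym_eq n Sym.y i (i+1) ⟨h1, h2, h3⟩
      rw [if_pos ⟨rfl, rfl⟩]
      cases s <;>
        simp [hPe, hXe, hYe, hTm, hTm1, phi_of, phiSigmaMap, e1, mul_assoc]
    · rw [if_neg hA]
      by_cases hB : i = m
      · subst hB
        have hj : i + 1 < j := by omega
        rw [if_pos rfl]
        have hg : gsym n s (i+1) j = FreeGroup.of (Gen.pair s (i+1) j ⟨by omega, hj, h3⟩) :=
          gsym_eq n s (i+1) j ⟨by omega, hj, h3⟩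
        have hg' : gsym n s i j = FreeGroup.of (Gen.pair s i j ⟨h1, h2, h3⟩) :=
          gsym_eq n s i j ⟨h1, h2, h3⟩
        have e2 : j ≠ i := by omega
        have e3 : j ≠ i + 1 := by omega
        simp [hg, hg', hPe, phi_of, phiSigmaMap, e1, e2, e3, mul_assoc]
      · rw [if_neg hB]
        by_cases hC : j = m
        · subst hC
          have hi : i < j := h2
          rw [if_pos rfl]
          have hg : gsym n s (j+1) i = FreeGroup.of (Gen.pair s i (j+1) ⟨h1, by omega, hm2⟩) := by
            rw [gsym_comm]; exact gsym_eq n s i (j+1) ⟨h1, by omega, hm2⟩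
          have hg' : gsym n s j i = FreeGroup.of (Gen.pair s i j ⟨h1, h2, h3⟩) := by
            rw [gsym_comm]; exact gsym_eq n s i j ⟨h1, h2, h3⟩
          have e2 : i ≠ j := by omega
          have e3 : i ≠ j + 1 := by omega
          simp [hg, hg', hPe, phi_of, phiSigmaMap, e1, e2, e3, mul_assoc]
        · rw [if_neg hC]
          by_cases hD : i = m + 1
          · subst hD
            have hj : m + 1 < j := h2
            rw [if_pos rfl]
            have hg : gsym n s m j = FreeGroup.of (Gen.pair s m j ⟨hm1, by omega, h3⟩) :=
              gsym_eq n s m j ⟨hm1, by omega, h3⟩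
            have hg' : gsym n s (m+1) j = FreeGroup.of (Gen.pair s (m+1) j ⟨h1, h2, h3⟩) :=
              gsym_eq n s (m+1) j ⟨h1, h2, h3⟩
            have e2 : j ≠ m := by omega
            have e3 : j ≠ m + 1 := by omega
            simp [hg, hg', phi_of, phiSigmaMap, e1, e2, e3]
          · rw [if_neg hD]
            by_cases hE : j = m + 1
            · subst hE
              have hi : i < m := by omega
              rw [if_pos rfl]
              have hg : gsym n s m i = FreeGroup.of (Gen.pair s i m ⟨h1, hi, by omega⟩) := by
                rw [gsym_comm]; exact gsym_eq n s i m ⟨h1, hi, by omega⟩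
              have hg' : gsym n s (m+1) i = FreeGroup.of (Gen.pair s i (m+1) ⟨h1, h2, h3⟩) := by
                rw [gsym_comm]; exact gsym_eq n s i (m+1) ⟨h1, h2, h3⟩
              have e2 : i ≠ m := by omega
              have e3 : i ≠ m + 1 := by omega
              simp [hg, hg', phi_of, phiSigmaMap, e1, e2, e3]
            · rw [if_neg hE]
              have hg : gsym n s i j = FreeGroup.of (Gen.pair s i j ⟨h1, h2, h3⟩) :=
                gsym_eq n s i j ⟨h1, h2, h3⟩
              simp [hg, phi_of, phiSigmaMap, hA, hB, hC, hD, hE]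
  | t k hk =>
    simp only [psiSigmaMap]
    by_cases hB : k = m
    · subst hB
      simp [hTm, hTm1, phi_of, phiSigmaMap, e1, T_eq n k hk]
    · by_cases hC : k = m + 1
      · subst hC
        simp [hTm, hTm1, phi_of, phiSigmaMap, e1, T_eq n (m+1) hk]
      · simp [hB, hC, phi_of, phiSigmaMap, T_eq n k hk]

/-- For `1 ≤ m ≤ n-1`, `Φ_{σ_m}` and `Ψ_{σ_m}` are mutually inverse;
in particular `Φ_{σ_m}` is an automorphism of `F`. -/
theorem psiSigma_phiSigma_mutually_inverse (n : ℕ) (hn : 2 ≤ n)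
    (m : ℕ) (hm : 1 ≤ m ∧ m ≤ n - 1) :
    (psiSigma n m).comp (phiSigma n m) = MonoidHom.id (FG n) ∧
    (phiSigma n m).comp (psiSigma n m) = MonoidHom.id (FG n) ∧
    Function.Bijective (phiSigma n m) := by
  have hm2 : m + 1 ≤ n := by omega
  have c1 : (psiSigma n m).comp (phiSigma n m) = MonoidHom.id (FG n) := by
    apply FreeGroup.ext_hom
    intro a
    simp [MonoidHom.comp_apply, phi_of, comp1_gen n m hm.1 hm2 a]
  have c2 : (phiSigma n m).comp (psiSigma n m) = MonoidHom.id (FG n) := by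
    apply FreeGroup.ext_hom
    intro a
    simp [MonoidHom.comp_apply, psi_of, comp2_gen n m hm.1 hm2 a]
  refine ⟨c1, c2, ?_⟩
  have l1 : Function.LeftInverse (psiSigma n m) (phiSigma n m) := fun x => by
    have := DFunLike.congr_fun c1 x; simpa using this
  have l2 : Function.RightInverse (psiSigma n m) (phiSigma n m) := fun x => by
    have := DFunLike.congr_fun c2 x; simpa using this
  exact ⟨l1.injective, l2.surjective⟩

end PureHilden
end

section
/- Assume n ≥ 4. For every k with 3 < k ≤ n, in the presented group G the elements x_{12}x_{13} and p_{1k}p_{2k}p_{3k} commute: (x_{12}x_{13})(p_{1k}p_{2k}p_{3k}) =_R (p_{1k}p_{2k}p_{3k})(x_{12}x_{13}). -/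
namespace PureHilden

open Sym

lemma gsym_symm (n : ℕ) (s : Sym) (i j : ℕ) : gsym n s i j = gsym n s j i := by
  simp [gsym, Nat.min_comm, Nat.max_comm]

lemma comm_of_rel {n : ℕ} {a b : FG n} (h : Rel n (a * b * (b * a)⁻¹)) :
    Commute (piG n a) (piG n b) := by
  have h1 : piG n (a * b * (b * a)⁻¹) = 1 :=
    (QuotientGroup.eq_one_iff _).mpr (Subgroup.subset_normalClosure h)
  simp only [map_mul, map_inv, mul_inv_eq_one] at h1
  exact h1

/-- STATEMENT 8: For `n ≥ 4` and `3 < k ≤ n`, in `G` the elements `x₁₂x₁₃` and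
`p₁ₖp₂ₖp₃ₖ` commute. -/
theorem x12x13_comm_p1kp2kp3k (n : ℕ) (hn : 4 ≤ n) (k : ℕ)
    (hk : 3 < k ∧ k ≤ n) :
    piG n (X n 1 2 * X n 1 3 * (P n 1 k * P n 2 k * P n 3 k)) =
    piG n (P n 1 k * P n 2 k * P n 3 k * (X n 1 2 * X n 1 3)) := by
  obtain ⟨hk3, hkn⟩ := hk
  have i1 : Idx n 1 := ⟨by omega, by omega⟩
  have i2 : Idx n 2 := ⟨by omega, by omega⟩
  have i3 : Idx n 3 := ⟨by omega, by omega⟩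
  have ik : Idx n k := ⟨by omega, by omega⟩
  have h1 : Commute (piG n (X n 1 2)) (piG n (P n 1 k * P n 2 k)) :=
    comm_of_rel (Rel.c2 Sym.x Sym.p Sym.p i1 i2 ik
      (Or.inl ⟨by omega, by omega, by decide⟩))
  have h2 : Commute (piG n (X n 1 2)) (piG n (P n 3 k)) :=
    comm_of_rel (Rel.c1 Sym.x Sym.p i1 i2 i3 ik
      (Or.inl ⟨by omega, by omega, by omega⟩))
  have h3 : Commute (piG n (X n 1 3)) (piG n (P n 1 k * P n 3 k)) :=
    comm_of_rel (Rel.c2 Sym.x Sym.p Sym.p i1 i3 ik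
      (Or.inl ⟨by omega, by omega, by decide⟩))
  have h4 : Commute (piG n (X n 1 3)) (piG n (P n 1 k * P n 2 k * (P n 1 k)⁻¹)) := by
    have h := comm_of_rel (Rel.c3 Sym.x Sym.p i3 ik i1 i2
      (Or.inr (Or.inr (Or.inl ⟨by omega, by omega, by omega⟩))))
    rw [show P n k 1 = P n 1 k from gsym_symm n Sym.p k 1,
        show gsym n Sym.p k 2 = P n 2 k from gsym_symm n Sym.p k 2,
        show gsym n Sym.x 3 1 = X n 1 3 from gsym_symm n Sym.x 3 1] at h
    exact h
  simp only [map_mul, map_inv] at h1 h3 h4 ⊢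
  have Hu : Commute (piG n (X n 1 2))
      (piG n (P n 1 k) * piG n (P n 2 k) * piG n (P n 3 k)) := h1.mul_right h2
  have Hv : Commute (piG n (X n 1 3))
      (piG n (P n 1 k) * piG n (P n 2 k) * piG n (P n 3 k)) := by
    have h5 := h4.mul_right h3
    have e : (piG n (P n 1 k) * piG n (P n 2 k) * (piG n (P n 1 k))⁻¹) *
        (piG n (P n 1 k) * piG n (P n 3 k)) =
        piG n (P n 1 k) * piG n (P n 2 k) * piG n (P n 3 k) := by group
    rwa [e] at h5
  exact (Hu.mul_left Hv).eq


end PureHilden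
end

section
/- For all indices 1 ≤ i < j < k ≤ n, in the presented group G one has y_{ij} t_j x_{jk} =_R p_{jk}^{-1} x_{jk} y_{ij} p_{jk} t_j. -/
namespace PureHilden

open Sym

/-- From a relation `u * v⁻¹ ∈ R` deduce `π u = π v`. -/
lemma pi_eq {n : ℕ} {u v : FG n} (h : Rel n (u * v⁻¹)) : piG n u = piG n v := by
  have h1 : piG n (u * v⁻¹) = 1 := by
    rw [piG, QuotientGroup.mk'_apply, QuotientGroup.eq_one_iff]
    exact Subgroup.subset_normalClosure h
  rw [map_mul, map_inv] at h1
  exact mul_inv_eq_one.mp h1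

/-- For `1 ≤ i < j < k ≤ n`, in `G`:
`y_ij t_j x_jk =_R p_jk⁻¹ x_jk y_ij p_jk t_j`. -/
theorem stmt10 (n : ℕ) (hn : 2 ≤ n) (i j k : ℕ)
    (h : 1 ≤ i ∧ i < j ∧ j < k ∧ k ≤ n) :
    piG n (Y n i j * T n j * X n j k) =
    piG n ((P n j k)⁻¹ * X n j k * Y n i j * P n j k * T n j) := by
  obtain ⟨h1i, hij, hjk, hkn⟩ := h
  have hi : Idx n i := ⟨h1i, ((hij.trans hjk).le).trans hkn⟩
  have hj : Idx n j := ⟨h1i.trans hij.le, hjk.le.trans hkn⟩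
  have hk : Idx n k := ⟨hj.1.trans hjk.le, hkn⟩
  have hjk2 : Idx2 n j k := ⟨hj.1, hjk, hkn⟩
  have e1 : piG n (X n j k * P n j k * T n j) = piG n (P n j k * T n j * X n j k) :=
    pi_eq (Rel.mx hjk2)
  have e2 : piG n (Y n i j * (P n i k * X n j k)) = piG n (P n i k * X n j k * Y n i j) :=
    pi_eq (Rel.c2 Sym.y Sym.p Sym.x hi hj hk (Or.inl ⟨hij, hjk, by decide⟩))
  have e3 : piG n (Y n i j * (P n i k * P n j k)) = piG n (P n i k * P n j k * Y n i j) :=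
    pi_eq (Rel.c2 Sym.y Sym.p Sym.p hi hj hk (Or.inl ⟨hij, hjk, by decide⟩))
  simp only [map_mul, map_inv] at e1 e2 e3 ⊢
  set a := piG n (Y n i j)
  set p2 := piG n (P n i k)
  set p3 := piG n (P n j k)
  set x3 := piG n (X n j k)
  set t := piG n (T n j)
  have c2' : Commute a (p2 * x3) := e2
  have c3' : Commute a (p2 * p3) := e3
  have hc : Commute a (p3⁻¹ * x3) := by
    have hcomb := (c3'.inv_right).mul_right c2'
    have heq : (p2 * p3)⁻¹ * (p2 * x3) = p3⁻¹ * x3 := by group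
    rwa [heq] at hcomb
  have ht : t * x3 = p3⁻¹ * (x3 * p3 * t) := by rw [e1]; group
  calc a * t * x3 = a * (t * x3) := by group
    _ = a * (p3⁻¹ * (x3 * p3 * t)) := by rw [ht]
    _ = a * (p3⁻¹ * x3) * (p3 * t) := by group
    _ = (p3⁻¹ * x3) * a * (p3 * t) := by rw [hc.eq]
    _ = p3⁻¹ * x3 * a * p3 * t := by group

end PureHilden
end

section
/- For all indices 1 ≤ i < j < k ≤ n, in the presented group G one has p_{jk} y_{ij} p_{jk}^{-1} x_{jk} =_R x_{jk} y_{ij}. -/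
namespace PureHilden

open Sym

/-- Each relation word maps to `1` in `G`. -/
lemma piG_rel_one {n : ℕ} {w : FG n} (hw : Rel n w) : piG n w = 1 :=
  (QuotientGroup.eq_one_iff w).mpr
    (Subgroup.subset_normalClosure hw)

lemma piG_rel_eq {n : ℕ} {u v : FG n} (hw : Rel n (u * v⁻¹)) :
    piG n u = piG n v := by
  have h1 := piG_rel_one hw
  rw [map_mul, map_inv, mul_inv_eq_one] at h1
  exact h1

/-- STATEMENT 13: For `1 ≤ i < j < k ≤ n`, in `G`:
`p_jk y_ij p_jk⁻¹ x_jk =_R x_jk y_ij`. -/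
theorem stmt13 (n : ℕ) (hn : 2 ≤ n) (i j k : ℕ)
    (h : 1 ≤ i ∧ i < j ∧ j < k ∧ k ≤ n) :
    piG n (P n j k * Y n i j * (P n j k)⁻¹ * X n j k) =
    piG n (X n j k * Y n i j) := by
  obtain ⟨h1, h2, h3, h4⟩ := h
  have hi : Idx n i := ⟨h1, le_of_lt (lt_of_lt_of_le (h2.trans h3) h4)⟩
  have hj : Idx n j := ⟨le_trans h1 h2.le, le_of_lt (lt_of_lt_of_le h3 h4)⟩
  have hk : Idx n k := ⟨le_trans h1 (h2.trans h3).le, h4⟩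
  have e1 := piG_rel_eq (Rel.c2 Sym.y Sym.p Sym.x hi hj hk
    (Or.inl ⟨h2, h3, by simp [c2A]⟩))
  have e2 := piG_rel_eq (Rel.c2 Sym.y Sym.p Sym.p hi hj hk
    (Or.inl ⟨h2, h3, by simp [c2A]⟩))
  simp only [map_mul, map_inv] at e1 e2 ⊢
  set y := piG n (gsym n Sym.y i j) with hy
  set q := piG n (gsym n Sym.p i k) with hq
  set r := piG n (gsym n Sym.p j k) with hr
  set x := piG n (gsym n Sym.x j k) with hx
  show r * y * r⁻¹ * x = x * y
  -- from e2 : y * (q * r) = q * r * y, derive q⁻¹ * y * q = r * y * r⁻¹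
  have key : r * y * r⁻¹ = q⁻¹ * y * q := by
    symm
    calc q⁻¹ * y * q = q⁻¹ * (y * (q * r)) * r⁻¹ := by group
      _ = q⁻¹ * (q * r * y) * r⁻¹ := by rw [e2]
      _ = r * y * r⁻¹ := by group
  rw [key]
  -- from e1 : y * (q * x) = q * x * y
  have : q⁻¹ * (y * (q * x)) = q⁻¹ * (q * x * y) := by rw [e1]
  calc q⁻¹ * y * q * x = q⁻¹ * (y * (q * x)) := by group
    _ = q⁻¹ * (q * x * y) := by rw [e1]
    _ = x * y := by group

end PureHilden
end
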